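/- Let G be a finite simple graph with no isolated vertex. If there exists a set D ⊆ V such that every minimum ev-dominating set M of G satisfies V_G(M) = D, then D is the unique minimum paired-dominating set of G. -/

import Mathlib

open SimpleGraph

variable {V : Type*}

/-- `D` is a dominating set of `G`: every vertex outside `D` has a neighbor in `D`. -/
def IsDomSet (G : SimpleGraph V) (D : Set V) : Prop :=
  ∀ v ∉ D, ∃ u ∈ D, G.Adj u v

/-- The edge `e` ev-dominates the vertex `v`: `e` is incident to `v` or to a neighbor of `v`. -/
def EvDom (G : SimpleGraph V) (e : Sym2 V) (v : V) : Prop :=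
  v ∈ e ∨ ∃ u ∈ e, G.Adj u v

/-- `M` is an edge-vertex dominating set of `G`. -/
def IsEvDomSet (G : SimpleGraph V) (M : Set (Sym2 V)) : Prop :=
  M ⊆ G.edgeSet ∧ ∀ v : V, ∃ e ∈ M, EvDom G e v

/-- `M` is a minimum edge-vertex dominating set of `G`. -/
def IsMinEvDomSet (G : SimpleGraph V) (M : Set (Sym2 V)) : Prop :=
  IsEvDomSet G M ∧ ∀ M' : Set (Sym2 V), IsEvDomSet G M' → M.ncard ≤ M'.ncard

/-- The edge-vertex domination number `γ_ev(G)`. -/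
noncomputable def evNum (G : SimpleGraph V) : ℕ :=
  sInf {n | ∃ M : Set (Sym2 V), IsEvDomSet G M ∧ M.ncard = n}

/-- The set of all endpoints of edges in `M`. -/
def edgeVerts (M : Set (Sym2 V)) : Set V := {v | ∃ e ∈ M, v ∈ e}

/-- `M` is a perfect matching of the induced subgraph `G[D]`: a set of edges of `G`
with all endpoints in `D`, such that every vertex of `D` lies in exactly one edge of `M`. -/
def IsPMOn (G : SimpleGraph V) (D : Set V) (M : Set (Sym2 V)) : Prop :=
  M ⊆ G.edgeSet ∧ (∀ e ∈ M, ∀ v ∈ e, v ∈ D) ∧ ∀ v ∈ D, ∃! e, e ∈ M ∧ v ∈ e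

/-- `D` is a paired-dominating set of `G`. -/
def IsPairedDomSet (G : SimpleGraph V) (D : Set V) : Prop :=
  IsDomSet G D ∧ ∃ M : Set (Sym2 V), IsPMOn G D M

/-- `D` is a minimum paired-dominating set of `G`. -/
def IsMinPairedDomSet (G : SimpleGraph V) (D : Set V) : Prop :=
  IsPairedDomSet G D ∧ ∀ D' : Set V, IsPairedDomSet G D' → D.ncard ≤ D'.ncard

/-- The paired-domination number `γ_pr(G)`. -/
noncomputable def prNum (G : SimpleGraph V) : ℕ :=
  sInf {n | ∃ D : Set V, IsPairedDomSet G D ∧ D.ncard = n}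

/-- No two distinct edges of `M` share a vertex. -/
def NoSharedVertex (M : Set (Sym2 V)) : Prop :=
  ∀ e ∈ M, ∀ f ∈ M, e ≠ f → ∀ v : V, v ∈ e → v ∉ f

/-- `G` has no isolated vertex. -/
def NoIsolated (G : SimpleGraph V) : Prop := ∀ v : V, ∃ u, G.Adj u v

lemma mem_edge_exists {G : SimpleGraph V} {e : Sym2 V} {v : V}
    (he : e ∈ G.edgeSet) (hv : v ∈ e) : ∃ u, G.Adj v u ∧ e = s(v, u) := by
  induction e using Sym2.ind with
  | _ a b =>
    rw [Sym2.mem_iff] at hv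
    rw [SimpleGraph.mem_edgeSet] at he
    rcases hv with rfl | rfl
    · exact ⟨b, he, rfl⟩
    · exact ⟨a, he.symm, Sym2.eq_swap⟩

lemma edgeVerts_insert (e : Sym2 V) (M : Set (Sym2 V)) :
    edgeVerts (insert e M) = {v | v ∈ e} ∪ edgeVerts M := by
  ext v
  simp only [edgeVerts, Set.mem_insert_iff, Set.mem_setOf_eq, Set.mem_union]
  constructor
  · rintro ⟨f, rfl | hf, hvf⟩
    · exact Or.inl hvf
    · exact Or.inr ⟨f, hf, hvf⟩
  · rintro (hv | ⟨f, hf, hvf⟩)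
    · exact ⟨e, Or.inl rfl, hv⟩
    · exact ⟨f, Or.inr hf, hvf⟩

lemma edge_form {G : SimpleGraph V} {e : Sym2 V} (he : e ∈ G.edgeSet) :
    ∃ a b, G.Adj a b ∧ e = s(a, b) := by
  induction e using Sym2.ind with
  | _ a b => exact ⟨a, b, he, rfl⟩

lemma card_edgeVerts [Fintype V] {G : SimpleGraph V} :
    ∀ M : Set (Sym2 V), M ⊆ G.edgeSet → NoSharedVertex M →
      (edgeVerts M).ncard = 2 * M.ncard := by
  intro M
  refine Set.Finite.induction_on
    (motive := fun M _ => M ⊆ G.edgeSet → NoSharedVertex M → (edgeVerts M).ncard = 2 * M.ncard)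
    M (Set.toFinite M) (fun _ _ => by simp [edgeVerts]) ?_
  clear M
  intro e M hnm hfin ih hsub hns
  have hsubM : M ⊆ G.edgeSet := (Set.subset_insert e M).trans hsub
  have hnsM : NoSharedVertex M := fun a ha b hb => hns a (Set.subset_insert e M ha) b (Set.subset_insert e M hb)
  obtain ⟨a, b, hab, rfl⟩ := edge_form (hsub (Set.mem_insert e M))
  have hset : {v : V | v ∈ s(a, b)} = {a, b} := by
    ext v; simp [Sym2.mem_iff]
  have hdisj : Disjoint {v : V | v ∈ s(a, b)} (edgeVerts M) := by
    rw [Set.disjoint_left]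
    rintro v hv ⟨f, hf, hvf⟩
    have hne : s(a, b) ≠ f := fun h => hnm (h ▸ hf)
    exact hns _ (Set.mem_insert _ _) f (Set.mem_insert_of_mem _ hf) hne v hv hvf
  rw [edgeVerts_insert, Set.ncard_union_eq hdisj (Set.toFinite _) (Set.toFinite _),
    hset, Set.ncard_pair hab.ne, ih hsubM hnsM,
    Set.ncard_insert_of_notMem hnm (Set.toFinite M)]
  ring

lemma pm_noshared {G : SimpleGraph V} {D : Set V} {M : Set (Sym2 V)}
    (h : IsPMOn G D M) : NoSharedVertex M := by
  intro e he f hf hne v hv hvf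
  obtain ⟨g, -, hu⟩ := h.2.2 v (h.2.1 e he v hv)
  exact hne ((hu e ⟨he, hv⟩).trans (hu f ⟨hf, hvf⟩).symm)

lemma pm_edgeVerts {G : SimpleGraph V} {D : Set V} {M : Set (Sym2 V)}
    (h : IsPMOn G D M) : edgeVerts M = D := by
  ext v
  constructor
  · rintro ⟨e, he, hv⟩; exact h.2.1 e he v hv
  · intro hv
    obtain ⟨e, ⟨he, hve⟩, -⟩ := h.2.2 v hv
    exact ⟨e, he, hve⟩

lemma pm_evdom {G : SimpleGraph V} {D : Set V} {M : Set (Sym2 V)}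
    (hdom : IsDomSet G D) (h : IsPMOn G D M) : IsEvDomSet G M := by
  refine ⟨h.1, fun v => ?_⟩
  by_cases hv : v ∈ D
  · obtain ⟨e, ⟨he, hve⟩, -⟩ := h.2.2 v hv
    exact ⟨e, he, Or.inl hve⟩
  · obtain ⟨u, hu, hadj⟩ := hdom v hv
    obtain ⟨e, ⟨he, hue⟩, -⟩ := h.2.2 u hu
    exact ⟨e, he, Or.inr ⟨u, hue, hadj⟩⟩

lemma exists_min_ev [Fintype V] (G : SimpleGraph V) (hG : NoIsolated G) :
    ∃ M, IsMinEvDomSet G M := by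
  have hex : ∃ n, n ∈ {n | ∃ M : Set (Sym2 V), IsEvDomSet G M ∧ M.ncard = n} := by
    refine ⟨G.edgeSet.ncard, G.edgeSet, ⟨subset_rfl, fun v => ?_⟩, rfl⟩
    obtain ⟨u, hu⟩ := hG v
    exact ⟨s(u, v), by simpa using hu, Or.inl (by simp)⟩
  obtain ⟨M, hM, hcard⟩ := Nat.sInf_mem hex
  refine ⟨M, hM, fun M' hM' => ?_⟩
  rw [hcard]
  exact Nat.sInf_le ⟨M', hM', rfl⟩

lemma min_ev_noshared [Fintype V] {G : SimpleGraph V} {D : Set V}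
    (h : ∀ M : Set (Sym2 V), IsMinEvDomSet G M → edgeVerts M = D)
    {M : Set (Sym2 V)} (hM : IsMinEvDomSet G M) : NoSharedVertex M := by
  intro e he f hf hef v hve hvf
  obtain ⟨⟨hsub, hcov⟩, hmin⟩ := hM
  obtain ⟨u, hadju, rfl⟩ := mem_edge_exists (hsub he) hve
  obtain ⟨w, hadjw, rfl⟩ := mem_edge_exists (hsub hf) hvf
  -- some vertex x is ev-dominated only by f = s(v,w)
  have hx : ∃ x, ∀ g ∈ M \ {s(v, w)}, ¬ EvDom G g x := by
    by_contra hc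
    push_neg at hc
    have hev : IsEvDomSet G (M \ {s(v, w)}) :=
      ⟨Set.diff_subset.trans hsub, hc⟩
    have hle := hmin _ hev
    have hlt : (M \ {s(v, w)}).ncard < M.ncard :=
      Set.ncard_diff_singleton_lt_of_mem hf (Set.toFinite M)
    omega
  obtain ⟨x, hx⟩ := hx
  have hfx : EvDom G s(v, w) x := by
    obtain ⟨g, hg, hgx⟩ := hcov x
    rcases eq_or_ne g s(v, w) with rfl | hgf
    · exact hgx
    · exact absurd hgx (hx g ⟨hg, hgf⟩)
  have hnex := hx _ (⟨he, hef⟩ : s(v, u) ∈ M \ {s(v, w)})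
  rcases hfx with hxm | ⟨y, hy, hadjyx⟩
  · rw [Sym2.mem_iff] at hxm
    rcases hxm with rfl | rfl
    · exact hnex (Or.inl (by simp))
    · exact hnex (Or.inr ⟨v, by simp, hadjw⟩)
  · rw [Sym2.mem_iff] at hy
    rcases hy with hyv | hyw
    · exact hnex (Or.inr ⟨v, by simp, hyv ▸ hadjyx⟩)
    · -- main case: y = w, G.Adj w x
      have hadjyx : G.Adj w x := hyw ▸ hadjyx
      have hxv : x ≠ v := by
        rintro rfl
        exact hnex (Or.inl (by simp))
      have hxw : x ≠ w := fun h' => (h' ▸ hadjyx).ne rfl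
      have hDM : edgeVerts M = D := h M ⟨⟨hsub, hcov⟩, hmin⟩
      have hxD : x ∉ D := by
        rw [← hDM]
        rintro ⟨g, hg, hxg⟩
        rcases eq_or_ne g s(v, w) with rfl | hgf
        · rw [Sym2.mem_iff] at hxg
          rcases hxg with rfl | rfl
          · exact hxv rfl
          · exact hxw rfl
        · exact hx g ⟨hg, hgf⟩ (Or.inl hxg)
      have hwxM : s(w, x) ∉ M := by
        intro hmem
        rcases eq_or_ne (s(w, x) : Sym2 V) s(v, w) with heq | hne'
        · have : x ∈ (s(v, w) : Sym2 V) := heq ▸ (by simp : x ∈ (s(w, x) : Sym2 V))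
          rw [Sym2.mem_iff] at this
          rcases this with rfl | rfl
          · exact hxv rfl
          · exact hxw rfl
        · exact hx _ ⟨hmem, hne'⟩ (Or.inl (by simp))
      set M' : Set (Sym2 V) := insert s(w, x) (M \ {s(v, w)}) with hM'def
      have hM'ev : IsEvDomSet G M' := by
        constructor
        · refine Set.insert_subset ?_ (Set.diff_subset.trans hsub)
          rwa [SimpleGraph.mem_edgeSet]
        · intro z
          obtain ⟨g, hg, hgz⟩ := hcov z
          rcases eq_or_ne g s(v, w) with rfl | hgf
          · rcases hgz with hzm | ⟨y', hy', hadjy'z⟩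
            · rw [Sym2.mem_iff] at hzm
              rcases hzm with hzm | hzm
              · exact ⟨s(v, u), Set.mem_insert_of_mem _ ⟨he, hef⟩, Or.inl (by simp [hzm])⟩
              · exact ⟨s(w, x), Set.mem_insert _ _, Or.inl (by simp [hzm])⟩
            · rw [Sym2.mem_iff] at hy'
              rcases hy' with hy' | hy'
              · exact ⟨s(v, u), Set.mem_insert_of_mem _ ⟨he, hef⟩, Or.inr ⟨v, by simp, hy' ▸ hadjy'z⟩⟩
              · exact ⟨s(w, x), Set.mem_insert _ _, Or.inr ⟨w, by simp, hy' ▸ hadjy'z⟩⟩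
          · exact ⟨g, Set.mem_insert_of_mem _ ⟨hg, hgf⟩, hgz⟩
      have hcard : M'.ncard = M.ncard := by
        have h1 : s(w, x) ∉ M \ {s(v, w)} := fun h' => hwxM h'.1
        rw [hM'def, Set.ncard_insert_of_notMem h1 (Set.toFinite _),
          Set.ncard_diff_singleton_add_one hf (Set.toFinite M)]
      have hM'min : IsMinEvDomSet G M' :=
        ⟨hM'ev, fun N hN => hcard ▸ hmin N hN⟩
      have : x ∈ D := by
        rw [← h M' hM'min]
        exact ⟨s(w, x), Set.mem_insert _ _, by simp⟩
      exact hxD this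


theorem stmt5 [Fintype V] (G : SimpleGraph V) (hG : NoIsolated G) (D : Set V)
    (h : ∀ M : Set (Sym2 V), IsMinEvDomSet G M → edgeVerts M = D) :
    IsMinPairedDomSet G D ∧ ∀ D' : Set V, IsMinPairedDomSet G D' → D' = D := by
  obtain ⟨M, hM⟩ := exists_min_ev G hG
  have hns : NoSharedVertex M := min_ev_noshared h hM
  have hD : edgeVerts M = D := h M hM
  obtain ⟨⟨hsub, hcov⟩, hmin⟩ := hM
  -- M is a perfect matching on D
  have hpm : IsPMOn G D M := by
    refine ⟨hsub, fun e he v hv => hD ▸ ⟨e, he, hv⟩, fun v hv => ?_⟩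
    obtain ⟨e, he, hve⟩ : v ∈ edgeVerts M := hD ▸ hv
    refine ⟨e, ⟨he, hve⟩, fun g hg => ?_⟩
    by_contra hne
    exact hns g hg.1 e he hne v hg.2 hve
  -- D is dominating
  have hdom : IsDomSet G D := by
    intro v hv
    obtain ⟨e, he, hev⟩ := hcov v
    rcases hev with hvm | ⟨u, hue, hadj⟩
    · exact absurd (hD ▸ ⟨e, he, hvm⟩ : v ∈ D) hv
    · exact ⟨u, hD ▸ ⟨e, he, hue⟩, hadj⟩
  have hpaired : IsPairedDomSet G D := ⟨hdom, M, hpm⟩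
  have hDcard : D.ncard = 2 * M.ncard := hD ▸ card_edgeVerts M hsub hns
  -- minimality
  have hminD : ∀ D' : Set V, IsPairedDomSet G D' → D.ncard ≤ D'.ncard := by
    rintro D' ⟨hdom', M'', hpm''⟩
    have hev'' : IsEvDomSet G M'' := pm_evdom hdom' hpm''
    have hle := hmin M'' hev''
    have hcard'' : D'.ncard = 2 * M''.ncard :=
      (pm_edgeVerts hpm'') ▸ card_edgeVerts M'' hpm''.1 (pm_noshared hpm'')
    omega
  refine ⟨⟨hpaired, hminD⟩, ?_⟩
  rintro D' ⟨hpd', hmin'⟩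
  obtain ⟨hdom', M'', hpm''⟩ := hpd'
  have hev'' : IsEvDomSet G M'' := pm_evdom hdom' hpm''
  have hcard'' : D'.ncard = 2 * M''.ncard :=
    (pm_edgeVerts hpm'') ▸ card_edgeVerts M'' hpm''.1 (pm_noshared hpm'')
  have h1 : D'.ncard ≤ D.ncard := hmin' D hpaired
  have h2 : D.ncard ≤ D'.ncard := hminD D' ⟨hdom', M'', hpm''⟩
  have hMeq : M''.ncard = M.ncard := by omega
  have hM''min : IsMinEvDomSet G M'' :=
    ⟨hev'', fun N hN => hMeq ▸ hmin N hN⟩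
  rw [← pm_edgeVerts hpm'', h M'' hM''min]
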